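/- Let (X,T,ξ) be a Folklore map on X=[0,1] with two increasing branches, ξ={(0,c),(c,1)} for some c ∈ (0,1), so that the branch on (0,c) extends continuously to [0,c] with T(0)=0, and let μ ≪ λ be its invariant probability measure with continuous density h. Let (E_k)_{k≥1} be a sequence of intervals containing the fixed point x*=0 with λ(E_k) → 0, let Y := (c,1) and E'_k := Y ∩ T^{-1}E_k. Then μ((0,c) ∩ T^{-1}E_k) ∼ μ(E_k)/T'(0^+) and consequently μ(E'_k) ∼ θ·μ(E_k) as k → ∞, where θ := 1 − 1/T'(0^+) and T'(0^+) is the right derivative of T at 0. -/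

import Mathlib

open MeasureTheory Filter Set Topology
open scoped ENNReal

/-- First hitting time `φ_E` (values in `ℝ≥0∞`; `∞` if the orbit never hits `E`). -/
noncomputable def hitTime {X : Type*} (T : X → X) (E : Set X) (x : X) : ℝ≥0∞ :=
  sInf {t : ℝ≥0∞ | ∃ n : ℕ, 1 ≤ n ∧ T^[n] x ∈ E ∧ t = (n : ℝ≥0∞)}

/-- First hitting time, `ℕ`-valued (junk value `0` if the orbit never hits `E`). -/
noncomputable def hitN {X : Type*} (T : X → X) (E : Set X) (x : X) : ℕ :=
  sInf {n : ℕ | 1 ≤ n ∧ T^[n] x ∈ E}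

/-- First return map `T_Y`. -/
noncomputable def returnMap {X : Type*} (T : X → X) (Y : Set X) (x : X) : X :=
  T^[hitN T Y x] x

/-- Normalized restriction `μ_Y = μ(Y)⁻¹ μ(Y ∩ ·)`. -/
noncomputable def condMeas {X : Type*} [MeasurableSpace X] (μ : Measure X) (Y : Set X) :
    Measure X := (μ Y)⁻¹ • μ.restrict Y

/-- Convergence in distribution, at continuity points of the limit distribution function,
of `[0,∞]`-valued random variables `f k` on `(X, ν)` to a random variable `R` on `(Ω, P)`. -/
def TendstoInDistrib {X Ω : Type*} [MeasurableSpace X] [MeasurableSpace Ω]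
    (ν : Measure X) (f : ℕ → X → ℝ≥0∞) (P : Measure Ω) (R : Ω → ℝ≥0∞) : Prop :=
  ∀ t : ℝ, ContinuousAt (fun s : ℝ => (P {ω | R ω ≤ ENNReal.ofReal s}).toReal) t →
    Tendsto (fun k => (ν {x | f k x ≤ ENNReal.ofReal t}).toReal) atTop
      (𝓝 ((P {ω | R ω ≤ ENNReal.ofReal t}).toReal))

/-- `f k → ∞` in `ν`-measure. -/
def TendstoInfInMeasure {X : Type*} [MeasurableSpace X] (ν : Measure X)
    (f : ℕ → X → ℝ≥0∞) : Prop :=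
  ∀ N : ℕ, 1 ≤ N → Tendsto (fun k => ν {x | f k x ≤ (N : ℝ≥0∞)}) atTop (𝓝 0)

/-- Points of `Y` can only reach `E` via `E'`. -/
def OnlyReachVia {X : Type*} [MeasurableSpace X] (μ : Measure X) (T : X → X)
    (Y E E' : Set X) : Prop :=
  ∀ n : ℕ, ∀ᵐ x ∂μ.restrict Y, T^[n] x ∈ E → ∃ j ≤ n, T^[j] x ∈ E'
/-- A **Folklore map** on the bounded interval `X = (a,b)`: a piecewise monotonic system
with countably many open-interval cylinders `Z ∈ ξ` covering `X` up to a Lebesgue null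
set, each branch a `C²` homeomorphism (strictly monotone and `C²` on its cylinder) onto
`X` mod `λ` (piecewise onto), uniformly expanding, and satisfying Adler's condition. -/
structure IsFolklore (a b : ℝ) (T : ℝ → ℝ) (ξ : Set (Set ℝ)) : Prop where
  lt : a < b
  countable : ξ.Countable
  cyl : ∀ Z ∈ ξ, ∃ u v : ℝ, u < v ∧ a ≤ u ∧ v ≤ b ∧ Z = Set.Ioo u v
  disj : ξ.Pairwise Disjoint
  full : volume (Set.Ioo a b \ ⋃₀ ξ) = 0
  maps : Set.MapsTo T (Set.Icc a b) (Set.Icc a b)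
  mono : ∀ Z ∈ ξ, StrictMonoOn T Z ∨ StrictAntiOn T Z
  smooth : ∀ Z ∈ ξ, ContDiffOn ℝ 2 T Z
  onto : ∀ Z ∈ ξ, volume (Set.Ioo a b \ T '' Z) = 0
  expanding : ∃ ρ : ℝ, 1 < ρ ∧ ∀ Z ∈ ξ, ∀ x ∈ Z, ρ ≤ |deriv T x|
  adler : ∃ C : ℝ, ∀ Z ∈ ξ, ∀ x ∈ Z, |deriv (deriv T) x| ≤ C * (deriv T x) ^ 2

lemma dens_le {h : ℝ → ℝ} (μ : Measure ℝ)
    (hdens : μ = (volume.restrict (Set.Icc (0:ℝ) 1)).withDensity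
      (fun x => ENNReal.ofReal (h x)))
    {S : Set ℝ} (hS : MeasurableSet S) (hsub : S ⊆ Set.Icc (0:ℝ) 1)
    {M : ℝ} (hM : ∀ x ∈ S, h x ≤ M) :
    μ S ≤ ENNReal.ofReal M * volume S := by
  rw [hdens, withDensity_apply _ hS, Measure.restrict_restrict hS,
    Set.inter_eq_self_of_subset_left hsub]
  calc ∫⁻ x in S, ENNReal.ofReal (h x) ∂volume
      ≤ ∫⁻ _ in S, ENNReal.ofReal M ∂volume :=
        lintegral_mono_ae ((ae_restrict_of_forall_mem hS) fun x hx =>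
          ENNReal.ofReal_le_ofReal (hM x hx))
    _ = ENNReal.ofReal M * volume S := setLIntegral_const S _

lemma dens_ge {h : ℝ → ℝ} (μ : Measure ℝ)
    (hdens : μ = (volume.restrict (Set.Icc (0:ℝ) 1)).withDensity
      (fun x => ENNReal.ofReal (h x)))
    {S : Set ℝ} (hS : MeasurableSet S) (hsub : S ⊆ Set.Icc (0:ℝ) 1)
    {M : ℝ} (hM : ∀ x ∈ S, M ≤ h x) :
    ENNReal.ofReal M * volume S ≤ μ S := by
  rw [hdens, withDensity_apply _ hS, Measure.restrict_restrict hS,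
    Set.inter_eq_self_of_subset_left hsub]
  calc ENNReal.ofReal M * volume S = ∫⁻ _ in S, ENNReal.ofReal M ∂volume :=
        (setLIntegral_const S _).symm
    _ ≤ ∫⁻ x in S, ENNReal.ofReal (h x) ∂volume :=
        lintegral_mono_ae ((ae_restrict_of_forall_mem hS) fun x hx =>
          ENNReal.ofReal_le_ofReal (hM x hx))

lemma deriv_ge {c ρ : ℝ} {T : ℝ → ℝ}
    (hsm : ContDiffOn ℝ 2 T (Set.Ioo 0 c)) (hmono : StrictMonoOn T (Set.Ioo 0 c))
    (hexp : ∀ x ∈ Set.Ioo 0 c, ρ ≤ |deriv T x|) :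
    ∀ x ∈ Set.Ioo 0 c, ρ ≤ deriv T x := by
  intro x hx
  have hdiff : DifferentiableOn ℝ T (Set.Ioo 0 c) := hsm.differentiableOn (by norm_num)
  have hdAt : HasDerivAt T (deriv T x) x :=
    ((hdiff x hx).differentiableAt (isOpen_Ioo.mem_nhds hx)).hasDerivAt
  have hnn : 0 ≤ deriv T x := by
    have hsl : Tendsto (slope T x) (𝓝[≠] x) (𝓝 (deriv T x)) :=
      hasDerivAt_iff_tendsto_slope.mp hdAt
    have hsl' : Tendsto (slope T x) (𝓝[>] x) (𝓝 (deriv T x)) :=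
      hsl.mono_left (nhdsWithin_mono _ (fun y hy => ne_of_gt hy))
    refine ge_of_tendsto hsl' ?_
    have hev : ∀ᶠ y in 𝓝[>] x, y < c :=
      eventually_nhdsWithin_of_eventually_nhds (eventually_lt_nhds hx.2)
    filter_upwards [hev, self_mem_nhdsWithin] with y hyc hyx
    have hy : y ∈ Set.Ioo 0 c := ⟨lt_trans hx.1 hyx, hyc⟩
    have : T x < T y := hmono hx hy hyx
    have hpos : 0 < y - x := sub_pos.mpr hyx
    rw [slope_def_field]
    have : 0 ≤ T y - T x := le_of_lt (sub_pos.mpr this)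
    positivity
  have := hexp x hx
  rwa [abs_of_nonneg hnn] at this

lemma T_ge {c ρ : ℝ} {T : ℝ → ℝ}
    (hsm : ContDiffOn ℝ 2 T (Set.Ioo 0 c)) (hmono : StrictMonoOn T (Set.Ioo 0 c))
    (hexp : ∀ x ∈ Set.Ioo 0 c, ρ ≤ |deriv T x|)
    (hT0 : T 0 = 0) (hTcont : ContinuousWithinAt T (Set.Ico 0 c) 0) :
    ∀ x ∈ Set.Ioo 0 c, ρ * x ≤ T x := by
  intro x hx
  have key := (convex_Ioo (0:ℝ) c).mul_sub_le_image_sub_of_le_deriv hsm.continuousOn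
    (by rw [isOpen_Ioo.interior_eq]; exact hsm.differentiableOn (by norm_num))
    (by rw [isOpen_Ioo.interior_eq]; exact deriv_ge hsm hmono hexp)
  have hne : (𝓝[Set.Ioo 0 x] (0:ℝ)).NeBot := left_nhdsWithin_Ioo_neBot hx.1
  have hTa : Tendsto T (𝓝[Set.Ioo 0 x] (0:ℝ)) (𝓝 0) := by
    have : Tendsto T (𝓝[Set.Ico 0 c] (0:ℝ)) (𝓝 (T 0)) := hTcont
    rw [hT0] at this
    exact this.mono_left (nhdsWithin_mono _ (fun y hy => ⟨le_of_lt hy.1, lt_trans hy.2 hx.2⟩))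
  have h1 : Tendsto (fun a => ρ * (x - a)) (𝓝[Set.Ioo 0 x] (0:ℝ)) (𝓝 (ρ * x)) := by
    have : ContinuousAt (fun a : ℝ => ρ * (x - a)) 0 := by fun_prop
    have h := this.tendsto.mono_left (nhdsWithin_le_nhds (s := Set.Ioo 0 x))
    simpa using h
  have h2 : Tendsto (fun a => T x - T a) (𝓝[Set.Ioo 0 x] (0:ℝ)) (𝓝 (T x)) := by
    simpa using (tendsto_const_nhds (x := T x)).sub hTa
  refine le_of_tendsto_of_tendsto h1 h2 ?_
  filter_upwards [self_mem_nhdsWithin] with a ha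
  exact key a ⟨ha.1, lt_trans ha.2 hx.2⟩ x hx (le_of_lt ha.2)

lemma d_ge {c ρ d : ℝ} (hc : 0 < c) {T : ℝ → ℝ}
    (hT : ∀ x ∈ Set.Ioo 0 c, ρ * x ≤ T x) (hT0 : T 0 = 0)
    (hd : HasDerivWithinAt T d (Set.Ici 0) 0) : ρ ≤ d := by
  have hsl : Tendsto (slope T 0) (𝓝[Set.Ici 0 \ {0}] (0:ℝ)) (𝓝 d) :=
    hasDerivWithinAt_iff_tendsto_slope.mp hd
  have hne : (𝓝[Set.Ioo 0 c] (0:ℝ)).NeBot := left_nhdsWithin_Ioo_neBot hc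
  have hsl' : Tendsto (slope T 0) (𝓝[Set.Ioo 0 c] (0:ℝ)) (𝓝 d) :=
    hsl.mono_left (nhdsWithin_mono _ (fun y hy => ⟨le_of_lt hy.1, ne_of_gt hy.1⟩))
  refine ge_of_tendsto hsl' ?_
  filter_upwards [self_mem_nhdsWithin] with y hy
  rw [slope_def_field, hT0, sub_zero, sub_zero, le_div_iff₀ hy.1]
  exact hT y hy


/-- **The measure of the preimage pieces at a hyperbolic fixed point.**
In the setting of a simple two-branch Folklore map on `[0,1]` with fixed point `0`,
right derivative `d = T'(0⁺)` and invariant probability `μ` with continuous density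
`h`, for intervals `E_k ∋ 0` with `λ(E_k) → 0` one has
`μ((0,c) ∩ T⁻¹E_k) ∼ μ(E_k)/d` and hence `μ(E'_k) ∼ θ·μ(E_k)` with
`E'_k = (c,1) ∩ T⁻¹E_k` and `θ = 1 − 1/d`. -/
theorem stmt11 {c : ℝ} (hc : c ∈ Set.Ioo (0 : ℝ) 1) {T : ℝ → ℝ}
    (hFolk : IsFolklore 0 1 T ({Set.Ioo 0 c, Set.Ioo c 1} : Set (Set ℝ)))
    (hmono₁ : StrictMonoOn T (Set.Ioo 0 c)) (hmono₂ : StrictMonoOn T (Set.Ioo c 1))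
    (hT0 : T 0 = 0) (hTcont : ContinuousWithinAt T (Set.Ico 0 c) 0)
    (d : ℝ) (hd : HasDerivWithinAt T d (Set.Ici 0) 0)
    (μ : Measure ℝ) [IsProbabilityMeasure μ] (hac : μ ≪ volume)
    (hsupp : μ (Set.Icc (0:ℝ) 1)ᶜ = 0) (hinv : MeasurePreserving T μ μ)
    (h : ℝ → ℝ) (hhcont : ContinuousOn h (Set.Icc 0 1))
    (hhpos : ∀ x ∈ Set.Icc (0:ℝ) 1, 0 < h x)
    (hdens : μ = (volume.restrict (Set.Icc (0:ℝ) 1)).withDensity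
      (fun x => ENNReal.ofReal (h x)))
    (E : ℕ → Set ℝ) (hEm : ∀ k, MeasurableSet (E k)) (hEi : ∀ k, (E k).OrdConnected)
    (hE0 : ∀ k, (0 : ℝ) ∈ E k) (hEsub : ∀ k, E k ⊆ Set.Icc 0 1)
    (hEpos : ∀ k, 0 < volume (E k))
    (hEsmall : Tendsto (fun k => volume (E k)) atTop (𝓝 0)) :
    Tendsto (fun k =>
        (μ (Set.Ioo 0 c ∩ T ⁻¹' (E k))).toReal / (μ (E k)).toReal)
      atTop (𝓝 (1 / d)) ∧
    Tendsto (fun k =>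
        (μ (Set.Ioo c 1 ∩ T ⁻¹' (E k))).toReal / (μ (E k)).toReal)
      atTop (𝓝 (1 - 1 / d)) := by
  obtain ⟨ρ, hρ1, hρexp⟩ := hFolk.expanding
  have hmemZ : Set.Ioo 0 c ∈ ({Set.Ioo 0 c, Set.Ioo c 1} : Set (Set ℝ)) := Or.inl rfl
  have hsm : ContDiffOn ℝ 2 T (Set.Ioo 0 c) := hFolk.smooth _ hmemZ
  have hexp : ∀ x ∈ Set.Ioo 0 c, ρ ≤ |deriv T x| := hρexp _ hmemZ
  have hTge : ∀ x ∈ Set.Ioo 0 c, ρ * x ≤ T x := T_ge hsm hmono₁ hexp hT0 hTcont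
  have hρd : ρ ≤ d := d_ge hc.1 hTge hT0 hd
  have hd0 : 0 < d := lt_of_lt_of_le (lt_trans one_pos hρ1) hρd
  have h0pos : 0 < h 0 := hhpos 0 ⟨le_refl 0, zero_le_one⟩
  have hTmeas : Measurable T := hinv.measurable
  set s : ℕ → ℝ := fun k => sSup (E k) with hs
  have hbdd : ∀ k, BddAbove (E k) := fun k => BddAbove.mono (hEsub k) bddAbove_Icc
  have hEIcc : ∀ k, E k ⊆ Set.Icc 0 (s k) := fun k x hx =>
    ⟨(hEsub k hx).1, le_csSup (hbdd k) hx⟩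
  have hIco : ∀ k, Set.Ico 0 (s k) ⊆ E k := by
    intro k x hx
    obtain ⟨y, hy, hxy⟩ := exists_lt_of_lt_csSup ⟨0, hE0 k⟩ hx.2
    exact (hEi k).out (hE0 k) hy ⟨hx.1, hxy.le⟩
  have hvolE : ∀ k, volume (E k) = ENNReal.ofReal (s k) := by
    intro k
    refine le_antisymm ?_ ?_
    · have h1 : volume (E k) ≤ volume (Set.Icc 0 (s k)) := measure_mono (hEIcc k)
      rwa [Real.volume_Icc, sub_zero] at h1
    · have h1 : volume (Set.Ico 0 (s k)) ≤ volume (E k) := measure_mono (hIco k)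
      rwa [Real.volume_Ico, sub_zero] at h1
  have hskpos : ∀ k, 0 < s k := fun k => ENNReal.ofReal_pos.mp ((hvolE k) ▸ hEpos k)
  have hsk1 : ∀ k, s k ≤ 1 := fun k => csSup_le ⟨0, hE0 k⟩ (fun x hx => (hEsub k hx).2)
  have hstend : Tendsto s atTop (𝓝 0) := by
    have h1 : Tendsto (fun k => (volume (E k)).toReal) atTop (𝓝 (0:ℝ≥0∞).toReal) :=
      (ENNReal.tendsto_toReal (by norm_num)).comp hEsmall
    simp only [ENNReal.toReal_zero] at h1
    refine h1.congr (fun k => ?_)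
    rw [hvolE k, ENNReal.toReal_ofReal (hskpos k).le]
  have hAmeas : ∀ k, MeasurableSet (Set.Ioo 0 c ∩ T ⁻¹' (E k)) :=
    fun k => measurableSet_Ioo.inter (hTmeas (hEm k))
  have hBmeas : ∀ k, MeasurableSet (Set.Ioo c 1 ∩ T ⁻¹' (E k)) :=
    fun k => measurableSet_Ioo.inter (hTmeas (hEm k))
  -- positivity of μ (E k)
  obtain ⟨x0, hx0, hminOn⟩ := isCompact_Icc.exists_isMinOn
    (Set.nonempty_Icc.mpr zero_le_one) hhcont
  have hmin : ∀ x ∈ Set.Icc (0:ℝ) 1, h x0 ≤ h x := fun x hx => hminOn hx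
  have hμEpos : ∀ k, 0 < (μ (E k)).toReal := by
    intro k
    have hge := dens_ge μ hdens (hEm k) (hEsub k) (fun x hx => hmin x (hEsub k hx))
    have hpos : (0:ℝ≥0∞) < ENNReal.ofReal (h x0) * volume (E k) :=
      ENNReal.mul_pos (ne_of_gt (ENNReal.ofReal_pos.mpr (hhpos x0 hx0))) (ne_of_gt (hEpos k))
    exact ENNReal.toReal_pos (ne_of_gt (lt_of_lt_of_le hpos hge)) (measure_ne_top μ _)
  -- sum identity
  have hsum : ∀ k, μ (Set.Ioo 0 c ∩ T ⁻¹' (E k)) + μ (Set.Ioo c 1 ∩ T ⁻¹' (E k))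
      = μ (E k) := by
    intro k
    set A := Set.Ioo 0 c ∩ T ⁻¹' (E k)
    set B := Set.Ioo c 1 ∩ T ⁻¹' (E k)
    have hdisj : Disjoint A B := by
      refine Disjoint.mono inter_subset_left inter_subset_left ?_
      rw [Set.disjoint_left]
      intro x hx hx'
      exact absurd hx'.1 (not_lt.mpr hx.2.le)
    have hAB : μ (A ∪ B) = μ A + μ B := measure_union hdisj (hBmeas k)
    have hpre : μ (T ⁻¹' (E k)) = μ (E k) :=
      hinv.measure_preimage (hEm k).nullMeasurableSet
    have h01 : μ ((T ⁻¹' (E k)) ∩ Set.Icc 0 1) = μ (T ⁻¹' (E k)) :=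
      measure_inter_conull hsupp
    have htriv : μ ({0, c, 1} : Set ℝ) = 0 := by
      refine hac ?_
      exact Set.Finite.measure_zero (Set.toFinite _) volume
    have hsub1 : A ∪ B ⊆ (T ⁻¹' (E k)) ∩ Set.Icc 0 1 := by
      rintro x (⟨hxI, hxT⟩ | ⟨hxI, hxT⟩)
      · exact ⟨hxT, ⟨hxI.1.le, (hxI.2.trans hc.2).le⟩⟩
      · exact ⟨hxT, ⟨(hc.1.trans hxI.1).le, hxI.2.le⟩⟩
    have hsub2 : (T ⁻¹' (E k)) ∩ Set.Icc 0 1 ⊆ (A ∪ B) ∪ ({0, c, 1} : Set ℝ) := by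
      rintro x ⟨hxT, hx0, hx1⟩
      by_cases h0 : x = 0
      · exact Or.inr (by simp [h0])
      by_cases hxc : x = c
      · exact Or.inr (by simp [hxc])
      by_cases h1 : x = 1
      · exact Or.inr (by simp [h1])
      left
      rcases lt_or_gt_of_ne hxc with h' | h'
      · exact Or.inl ⟨⟨lt_of_le_of_ne hx0 (Ne.symm h0), h'⟩, hxT⟩
      · exact Or.inr ⟨⟨h', lt_of_le_of_ne hx1 h1⟩, hxT⟩
    have hle1 : μ A + μ B ≤ μ (E k) := by
      rw [← hAB, ← hpre, ← h01]
      exact measure_mono hsub1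
    have hle2 : μ (E k) ≤ μ A + μ B := by
      rw [← hpre, ← h01]
      calc μ ((T ⁻¹' (E k)) ∩ Set.Icc 0 1) ≤ μ ((A ∪ B) ∪ ({0, c, 1} : Set ℝ)) :=
            measure_mono hsub2
        _ ≤ μ (A ∪ B) + μ ({0, c, 1} : Set ℝ) := measure_union_le _ _
        _ = μ (A ∪ B) := by rw [htriv, add_zero]
        _ = μ A + μ B := hAB
    exact le_antisymm hle1 hle2
  -- main limit
  have main1 : Tendsto (fun k =>
      (μ (Set.Ioo 0 c ∩ T ⁻¹' (E k))).toReal / (μ (E k)).toReal) atTop (𝓝 (1 / d)) := by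
    rw [Metric.tendsto_nhds]
    intro ε hε
    -- choose auxiliary t
    have hcont1 : ContinuousAt (fun t : ℝ => (h 0 + t) / ((h 0 - t) * (d - t))) 0 := by
      apply ContinuousAt.div (by fun_prop) (by fun_prop)
      simp only [sub_zero]
      positivity
    have hcont2 : ContinuousAt (fun t : ℝ => (h 0 - t) / ((h 0 + t) * (d + t))) 0 := by
      apply ContinuousAt.div (by fun_prop) (by fun_prop)
      simp only [add_zero]
      positivity
    have hval1 : (h 0 + 0) / ((h 0 - 0) * (d - 0)) = 1 / d := by
      rw [add_zero, sub_zero, sub_zero]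
      field_simp
    have hval2 : (h 0 - 0) / ((h 0 + 0) * (d + 0)) = 1 / d := by
      rw [add_zero, sub_zero, add_zero]
      field_simp
    have e1 : ∀ᶠ t in 𝓝 (0:ℝ), (h 0 + t) / ((h 0 - t) * (d - t)) < 1 / d + ε := by
      apply hcont1.tendsto.eventually_lt_const
      rw [hval1]; linarith
    have e2 : ∀ᶠ t in 𝓝 (0:ℝ), 1 / d - ε < (h 0 - t) / ((h 0 + t) * (d + t)) := by
      apply hcont2.tendsto.eventually_const_lt
      rw [hval2]; linarith
    have e3 : ∀ᶠ t in 𝓝 (0:ℝ), t < d := eventually_lt_nhds hd0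
    have e4 : ∀ᶠ t in 𝓝 (0:ℝ), t < h 0 := eventually_lt_nhds h0pos
    have hcomb := (((e1.and e2).and (e3.and e4)).filter_mono
      (nhdsWithin_le_nhds (s := Set.Ioi (0:ℝ)))).and eventually_mem_nhdsWithin
    obtain ⟨t, ⟨⟨hhi, hlo⟩, htd, hth⟩, ht0⟩ := hcomb.exists
    rw [Set.mem_Ioi] at ht0
    have hdt : 0 < d - t := sub_pos.mpr htd
    have hht : 0 < h 0 - t := sub_pos.mpr hth
    have hdt' : 0 < d + t := by linarith
    have hht' : 0 < h 0 + t := by linarith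
    -- slope bounds
    have hslope := hasDerivWithinAt_iff_tendsto_slope.mp hd
    have hev := Metric.tendsto_nhds.mp hslope t ht0
    rw [eventually_nhdsWithin_iff, Metric.eventually_nhds_iff] at hev
    obtain ⟨δ₁, hδ₁pos, hδ₁⟩ := hev
    have hTx : ∀ x : ℝ, 0 < x → x < δ₁ → (d - t) * x < T x ∧ T x < (d + t) * x := by
      intro x hx hxδ
      have hd1 : dist x 0 < δ₁ := by
        rw [Real.dist_eq, sub_zero, abs_of_pos hx]; exact hxδ
      have := hδ₁ hd1 ⟨hx.le, ne_of_gt hx⟩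
      rw [Real.dist_eq, slope_def_field, hT0, sub_zero, sub_zero, abs_sub_lt_iff] at this
      have hq1 : d - t < T x / x := by linarith [this.2]
      have hq2 : T x / x < d + t := by linarith [this.1]
      exact ⟨(lt_div_iff₀ hx).mp hq1, (div_lt_iff₀ hx).mp hq2⟩
    -- density bounds
    have hcw : ContinuousWithinAt h (Set.Icc 0 1) 0 := hhcont 0 ⟨le_refl 0, zero_le_one⟩
    have hev2 := Metric.tendsto_nhds.mp hcw t ht0
    rw [eventually_nhdsWithin_iff, Metric.eventually_nhds_iff] at hev2
    obtain ⟨δ₂, hδ₂pos, hδ₂⟩ := hev2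
    have hhb : ∀ y ∈ Set.Icc (0:ℝ) 1, y < δ₂ → h 0 - t ≤ h y ∧ h y ≤ h 0 + t := by
      intro y hy hyδ
      have hd2 : dist y 0 < δ₂ := by
        rw [Real.dist_eq, sub_zero, abs_of_nonneg hy.1]; exact hyδ
      have := hδ₂ hd2 hy
      rw [Real.dist_eq, abs_sub_lt_iff] at this
      constructor <;> linarith [this.1, this.2]
    -- the cutoff δ'
    set δ' : ℝ := min δ₁ c / 2 with hδ'
    have hδ'pos : 0 < δ' := by
      have := lt_min hδ₁pos hc.1
      positivity
    have hδ'c : δ' < c := by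
      have : min δ₁ c ≤ c := min_le_right _ _
      rw [hδ']; linarith
    have hδ'δ₁ : δ' < δ₁ := by
      have : min δ₁ c ≤ δ₁ := min_le_left _ _
      rw [hδ']; linarith
    -- eventual smallness conditions
    have hev1 : ∀ᶠ k in atTop, s k < (d - t) * δ' :=
      hstend.eventually_lt_const (by positivity)
    have hev2' : ∀ᶠ k in atTop, s k < (d - t) * δ₂ :=
      hstend.eventually_lt_const (by positivity)
    have hev3 : ∀ᶠ k in atTop, s k < δ₂ := hstend.eventually_lt_const hδ₂pos
    have hev4 : ∀ᶠ k in atTop, s k < (d + t) * δ' :=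
      hstend.eventually_lt_const (by positivity)
    filter_upwards [hev1, hev2', hev3, hev4] with k h1 h2 h3 h4
    set A := Set.Ioo 0 c ∩ T ⁻¹' (E k) with hA
    set a := (μ A).toReal with ha
    set e := (μ (E k)).toReal with he
    have hskp := hskpos k
    -- A ⊆ Ioo 0 (s k / (d - t))
    have hAsub : A ⊆ Set.Ioo 0 (s k / (d - t)) := by
      rintro x ⟨hxI, hxT⟩
      have hTxle : T x ≤ s k := (hEIcc k hxT).2
      have hxδ' : x < δ' := by
        by_contra hcon
        push_neg at hcon
        have hδ'I : δ' ∈ Set.Ioo 0 c := ⟨hδ'pos, hδ'c⟩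
        have hTm : T δ' ≤ T x := hmono₁.monotoneOn hδ'I hxI hcon
        have hTδ' := (hTx δ' hδ'pos hδ'δ₁).1
        linarith
      have hb := (hTx x hxI.1 (hxδ'.trans hδ'δ₁)).1
      refine ⟨hxI.1, ?_⟩
      rw [lt_div_iff₀ hdt, mul_comm]
      linarith
    have hAIcc : A ⊆ Set.Icc 0 1 := fun x hx =>
      ⟨hx.1.1.le, (hx.1.2.trans hc.2).le⟩
    have hskd2 : s k / (d - t) ≤ δ₂ := by
      rw [div_le_iff₀ hdt]
      linarith
    -- upper bound on a
    have ha_ub : a ≤ (h 0 + t) * (s k / (d - t)) := by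
      have hle := dens_le μ hdens (hAmeas k) hAIcc
        (M := h 0 + t) (fun x hx => (hhb x (hAIcc hx) (lt_of_lt_of_le (hAsub hx).2 hskd2)).2)
      have hvol : volume A ≤ ENNReal.ofReal (s k / (d - t)) := by
        have h1 : volume A ≤ volume (Set.Ioo 0 (s k / (d - t))) := measure_mono hAsub
        rwa [Real.volume_Ioo, sub_zero] at h1
      have : μ A ≤ ENNReal.ofReal ((h 0 + t) * (s k / (d - t))) := by
        rw [ENNReal.ofReal_mul hht'.le]
        exact hle.trans (mul_le_mul_right hvol _)
      exact ENNReal.toReal_le_of_le_ofReal (by positivity) this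
    -- lower bound on a
    have hIsubA : Set.Ioo 0 (s k / (d + t)) ⊆ A := by
      intro x hx
      have hxd' : x < δ' := by
        refine lt_of_lt_of_le hx.2 ?_
        rw [div_le_iff₀ hdt']
        linarith
      have hxc : x < c := hxd'.trans hδ'c
      have hTxub := (hTx x hx.1 (hxd'.trans hδ'δ₁)).2
      have hTxlt : T x < s k := by
        have : (d + t) * x < (d + t) * (s k / (d + t)) := by
          exact mul_lt_mul_of_pos_left hx.2 hdt'
        rw [mul_div_cancel₀ _ (ne_of_gt hdt')] at this
        linarith
      have hTx0 : 0 ≤ T x := (hFolk.maps ⟨hx.1.le, (hxc.trans hc.2).le⟩).1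
      exact ⟨⟨hx.1, hxc⟩, hIco k ⟨hTx0, hTxlt⟩⟩
    have hsd'le : s k / (d + t) ≤ δ₂ := by
      refine le_trans ?_ hskd2
      exact div_le_div_of_nonneg_left hskp.le hdt (by linarith)
    have ha_lb : (h 0 - t) * (s k / (d + t)) ≤ a := by
      have hsubIcc : Set.Ioo 0 (s k / (d + t)) ⊆ Set.Icc (0:ℝ) 1 := by
        intro x hx
        have hxd' : x < δ' := by
          refine lt_of_lt_of_le hx.2 ?_
          rw [div_le_iff₀ hdt']
          linarith
        exact ⟨hx.1.le, ((hxd'.trans hδ'c).trans hc.2).le⟩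
      have hge := dens_ge μ hdens measurableSet_Ioo hsubIcc
        (M := h 0 - t)
        (fun x hx => (hhb x (hsubIcc hx) (lt_of_lt_of_le hx.2 hsd'le)).1)
      have : ENNReal.ofReal ((h 0 - t) * (s k / (d + t))) ≤ μ A := by
        rw [ENNReal.ofReal_mul hht.le]
        calc ENNReal.ofReal (h 0 - t) * ENNReal.ofReal (s k / (d + t))
            = ENNReal.ofReal (h 0 - t) * volume (Set.Ioo 0 (s k / (d + t))) := by
              rw [Real.volume_Ioo, sub_zero]
          _ ≤ μ (Set.Ioo 0 (s k / (d + t))) := hge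
          _ ≤ μ A := measure_mono hIsubA
      exact (ENNReal.ofReal_le_iff_le_toReal (measure_ne_top μ _)).mp this
    -- bounds on e
    have he_ub : e ≤ (h 0 + t) * s k := by
      have hle := dens_le μ hdens (hEm k) (hEsub k)
        (M := h 0 + t)
        (fun x hx => (hhb x (hEsub k hx) (lt_of_le_of_lt (hEIcc k hx).2 h3)).2)
      have : μ (E k) ≤ ENNReal.ofReal ((h 0 + t) * s k) := by
        rw [ENNReal.ofReal_mul hht'.le, hvolE k] at *
        exact hle
      exact ENNReal.toReal_le_of_le_ofReal (by positivity) this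
    have he_lb : (h 0 - t) * s k ≤ e := by
      have hsubIcc : Set.Ico 0 (s k) ⊆ Set.Icc (0:ℝ) 1 := fun x hx =>
        ⟨hx.1, le_trans hx.2.le (hsk1 k)⟩
      have hge := dens_ge μ hdens measurableSet_Ico hsubIcc
        (M := h 0 - t)
        (fun x hx => (hhb x (hsubIcc hx) (lt_trans hx.2 h3)).1)
      have : ENNReal.ofReal ((h 0 - t) * s k) ≤ μ (E k) := by
        rw [ENNReal.ofReal_mul hht.le]
        calc ENNReal.ofReal (h 0 - t) * ENNReal.ofReal (s k)
            = ENNReal.ofReal (h 0 - t) * volume (Set.Ico 0 (s k)) := by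
              rw [Real.volume_Ico, sub_zero]
          _ ≤ μ (Set.Ico 0 (s k)) := hge
          _ ≤ μ (E k) := measure_mono (hIco k)
      exact (ENNReal.ofReal_le_iff_le_toReal (measure_ne_top μ _)).mp this
    have he_pos : 0 < e := lt_of_lt_of_le (by positivity) he_lb
    have ha_nn : 0 ≤ a := ENNReal.toReal_nonneg
    -- ratio bounds
    have key1 : a / e ≤ (h 0 + t) / ((h 0 - t) * (d - t)) := by
      calc a / e ≤ ((h 0 + t) * (s k / (d - t))) / ((h 0 - t) * s k) :=
            div_le_div₀ (by positivity) ha_ub (by positivity) he_lb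
        _ = (h 0 + t) / ((h 0 - t) * (d - t)) := by
            field_simp
    have key2 : (h 0 - t) / ((h 0 + t) * (d + t)) ≤ a / e := by
      calc (h 0 - t) / ((h 0 + t) * (d + t))
          = ((h 0 - t) * (s k / (d + t))) / ((h 0 + t) * s k) := by
            field_simp
        _ ≤ a / e := div_le_div₀ ha_nn ha_lb he_pos he_ub
    rw [Real.dist_eq, abs_sub_lt_iff]
    constructor <;> linarith
  refine ⟨main1, ?_⟩
  have heq : ∀ k, (μ (Set.Ioo c 1 ∩ T ⁻¹' (E k))).toReal
      = (μ (E k)).toReal - (μ (Set.Ioo 0 c ∩ T ⁻¹' (E k))).toReal := by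
    intro k
    have h' := congrArg ENNReal.toReal (hsum k)
    rw [ENNReal.toReal_add (measure_ne_top μ _) (measure_ne_top μ _)] at h'
    linarith
  have hfinal : Tendsto (fun k => 1 - (μ (Set.Ioo 0 c ∩ T ⁻¹' (E k))).toReal
      / (μ (E k)).toReal) atTop (𝓝 (1 - 1 / d)) := tendsto_const_nhds.sub main1
  refine hfinal.congr (fun k => ?_)
  rw [heq k, sub_div, div_self (ne_of_gt (hμEpos k))]
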